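/- Let L_{X,y}(f) = g(SSR_{X,y}(f)) + PEN applied to the coefficients of f on a fixed set G ⊆ ℕ^p of exponent vectors, where G consists only of maximal elements of the model's support (no element of the model's allowed exponent set is strictly componentwise greater than an element of G). Then for any polynomial f supported in the model and any P ∈ ℝ^p, L_{X,y}(f) = L_{T_P(X), y}(T_{−P}(f)). -/

import Mathlib

open MvPolynomial

set_option maxHeartbeats 1000000

/-- Translation of a polynomial: substitution `X i ↦ X i + C (P i)`. -/
noncomputable def T {p : ℕ} (P : Fin p → ℝ) :
    MvPolynomial (Fin p) ℝ →ₐ[ℝ] MvPolynomial (Fin p) ℝ :=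
  aeval (fun i => X i + C (P i))

/-- Sum of squared residuals. -/
noncomputable def SSR {n p : ℕ} (X : Fin n → Fin p → ℝ) (y : Fin n → ℝ)
    (f : MvPolynomial (Fin p) ℝ) : ℝ :=
  ∑ j, (y j - eval (X j) f) ^ 2

section Aux

variable {p : ℕ}

lemma XaddC_pow_term (q : ℝ) (a : Fin p) (n k : ℕ) :
    (X a : MvPolynomial (Fin p) ℝ) ^ k * C q ^ (n - k) * (n.choose k : MvPolynomial (Fin p) ℝ)
      = monomial (Finsupp.single a k) (q ^ (n - k) * n.choose k) := by
  rw [X_pow_eq_monomial, mul_assoc, ← C_pow,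
    ← map_natCast (C : ℝ →+* MvPolynomial (Fin p) ℝ), ← C_mul, C_apply, monomial_mul, one_mul,
    add_zero]

lemma coeff_XaddC_pow_ne (q : ℝ) (a : Fin p) (n : ℕ) (u : Fin p →₀ ℕ)
    (h : coeff u ((X a + C q : MvPolynomial (Fin p) ℝ) ^ n) ≠ 0) :
    u ≤ Finsupp.single a n := by
  rw [add_pow, coeff_sum] at h
  obtain ⟨k, hk, hne⟩ := Finset.exists_ne_zero_of_sum_ne_zero h
  rw [XaddC_pow_term, coeff_monomial] at hne
  have hu : Finsupp.single a k = u := by by_contra hc; simp [hc] at hne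
  have hkn : k ≤ n := by simpa using Finset.mem_range_succ_iff.mp hk
  subst hu
  rw [Finsupp.le_def]
  intro b
  rcases eq_or_ne b a with rfl | hb
  · simpa using hkn
  · simp [Finsupp.single_apply, Ne.symm hb]

lemma coeff_XaddC_pow_self (q : ℝ) (a : Fin p) (n : ℕ) :
    coeff (Finsupp.single a n) ((X a + C q : MvPolynomial (Fin p) ℝ) ^ n) = 1 := by
  rw [add_pow, coeff_sum, Finset.sum_eq_single n]
  · rw [XaddC_pow_term, coeff_monomial, if_pos rfl]; simp
  · intro k hk hkn
    rw [XaddC_pow_term, coeff_monomial, if_neg]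
    intro h
    exact hkn (by simpa using congrArg (fun f => f a) h)
  · simp

lemma T_monomial_single (Q : Fin p → ℝ) (a : Fin p) (n : ℕ) :
    T Q (monomial (Finsupp.single a n) (1 : ℝ)) = (X a + C (Q a)) ^ n := by
  rw [T, aeval_monomial, map_one, one_mul]
  exact Finsupp.prod_single_index (pow_zero _)

lemma coeff_T_monomial_le (Q : Fin p → ℝ) (e d : Fin p →₀ ℕ)
    (h : coeff d (T Q (monomial e (1 : ℝ))) ≠ 0) : d ≤ e := by
  induction e using Finsupp.induction generalizing d with
  | zero =>
    rcases eq_or_ne d 0 with rfl | hd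
    · exact le_refl _
    · rw [monomial_zero', map_one, map_one, coeff_one, if_neg (Ne.symm hd)] at h
      exact absurd rfl h
  | single_add a n e' ha hn ih =>
    have hmul : (monomial (Finsupp.single a n + e') (1 : ℝ))
        = monomial (Finsupp.single a n) 1 * monomial e' 1 := by
      rw [monomial_mul, one_mul]
    rw [hmul, map_mul, T_monomial_single, coeff_mul] at h
    obtain ⟨x, hx, hne⟩ := Finset.exists_ne_zero_of_sum_ne_zero h
    have h1 := coeff_XaddC_pow_ne _ _ _ _ (left_ne_zero_of_mul hne)
    have h2 := ih _ (right_ne_zero_of_mul hne)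
    rw [← Finset.HasAntidiagonal.mem_antidiagonal.mp hx]
    exact add_le_add h1 h2

lemma coeff_T_monomial_self (Q : Fin p → ℝ) (e : Fin p →₀ ℕ) :
    coeff e (T Q (monomial e (1 : ℝ))) = 1 := by
  induction e using Finsupp.induction with
  | zero => simp
  | single_add a n e' ha hn ih =>
    have hmul : (monomial (Finsupp.single a n + e') (1 : ℝ))
        = monomial (Finsupp.single a n) 1 * monomial e' 1 := by
      rw [monomial_mul, one_mul]
    rw [hmul, map_mul, T_monomial_single, coeff_mul,
      Finset.sum_eq_single_of_mem (Finsupp.single a n, e')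
        (Finset.HasAntidiagonal.mem_antidiagonal.mpr rfl)]
    · rw [coeff_XaddC_pow_self, ih, one_mul]
    · intro x hx hxne
      by_contra h0
      have h1 := coeff_XaddC_pow_ne (Q a) a n x.1 (left_ne_zero_of_mul h0)
      have h2 := coeff_T_monomial_le Q e' x.2 (right_ne_zero_of_mul h0)
      have hsum := Finset.HasAntidiagonal.mem_antidiagonal.mp hx
      have key : ∀ i, x.1 i = Finsupp.single a n i ∧ x.2 i = e' i := by
        intro i
        have hs : x.1 i + x.2 i = Finsupp.single a n i + e' i := by
          rw [← Finsupp.add_apply, hsum, Finsupp.add_apply]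
        have hl1 := Finsupp.le_def.mp h1 i
        have hl2 := Finsupp.le_def.mp h2 i
        omega
      have hx1 : x.1 = Finsupp.single a n := Finsupp.ext fun i => (key i).1
      have hx2 : x.2 = e' := Finsupp.ext fun i => (key i).2
      exact hxne (Prod.ext hx1 hx2)

lemma T_monomial_C (Q : Fin p → ℝ) (e : Fin p →₀ ℕ) (c : ℝ) :
    T Q (monomial e c) = C c * T Q (monomial e (1 : ℝ)) := by
  have : (monomial e c : MvPolynomial (Fin p) ℝ) = C c * monomial e 1 := by
    rw [C_mul_monomial, mul_one]
  rw [this, map_mul]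
  congr 1
  simp [T, algebraMap_eq]

lemma coeff_T_of_max (Q : Fin p → ℝ) (f : MvPolynomial (Fin p) ℝ) (d : Fin p →₀ ℕ)
    (hmax : ∀ e ∈ f.support, d ≤ e → e = d) :
    coeff d (T Q f) = coeff d f := by
  conv_lhs => rw [f.as_sum]
  rw [map_sum, coeff_sum, Finset.sum_eq_single d]
  · rw [T_monomial_C, coeff_C_mul, coeff_T_monomial_self, mul_one]
  · intro e he hed
    rw [T_monomial_C, coeff_C_mul]
    by_contra h0
    exact hed (hmax e he (coeff_T_monomial_le Q e d (right_ne_zero_of_mul h0)))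
  · intro hd
    rw [T_monomial_C, coeff_C_mul, notMem_support_iff.mp hd, zero_mul]

lemma eval_T (Q v : Fin p → ℝ) (f : MvPolynomial (Fin p) ℝ) :
    eval v (T Q f) = eval (fun i => v i + Q i) f := by
  induction f using MvPolynomial.induction_on with
  | C a => simp [T]
  | add f g hf hg => simp [map_add, hf, hg]
  | mul_X f i hf =>
    rw [map_mul, map_mul, hf]
    simp [T]

end Aux

/-- Invariance of the penalized loss `L_{X,y}(f) = g(SSR_{X,y}(f)) + PEN((coeff_d f)_{d∈G})`
under translation, when `G` consists only of maximal elements of the model support `I`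
and `f` is supported in `I`. -/
theorem penalized_loss_translation_invariant {n p : ℕ}
    (X : Fin n → Fin p → ℝ) (y : Fin n → ℝ)
    (g : ℝ → ℝ) (I : Set (Fin p →₀ ℕ)) (G : Set (Fin p →₀ ℕ))
    (PEN : (G → ℝ) → ℝ)
    (hGI : G ⊆ I)
    (hGmax : ∀ d ∈ G, ∀ e ∈ I, d ≤ e → e = d)
    (f : MvPolynomial (Fin p) ℝ) (hf : ↑f.support ⊆ I)
    (P : Fin p → ℝ) :
    g (SSR X y f) + PEN (fun d => coeff d.1 f) =
      g (SSR (fun j => X j + P) y (T (-P) f)) +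
        PEN (fun d => coeff d.1 (T (-P) f)) := by
  have hSSR : SSR X y f = SSR (fun j => X j + P) y (T (-P) f) := by
    unfold SSR
    refine Finset.sum_congr rfl fun j _ => ?_
    simp [eval_T]
  have hco : ∀ d : G, coeff (d : Fin p →₀ ℕ) (T (-P) f) = coeff (d : Fin p →₀ ℕ) f := by
    intro d
    exact coeff_T_of_max _ _ _ fun e he hde => hGmax d d.2 e (hf he) hde
  rw [hSSR]
  congr 1
  exact congrArg PEN (funext fun d => (hco d).symm)
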